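/- Let H₁, H₂ be Neumann realizations of −Δ + v₁ and −Δ + v₂ on the unit cube C₁(0), both with ground state energy 0 and positive ground states Ψ₁, Ψ₂. Let H₁₂ be the Neumann realization on U = C₁(0) ∪ C₁(e_d) of the operator equal to −Δ + v₁ on C₁(0) and −Δ + v₂(· − e_d) on C₁(e_d). If inf σ(H₁₂) = 0 and v₁, v₂ are symmetric about the hyperplane {x_d = 1/2}, then there exist μ₁, μ₂ > 0 with μ₁Ψ₁(x',0) = μ₂Ψ₂(x',0) for all x' ∈ [0,1]^{d-1}. -/

import Mathlib

open MeasureTheory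

noncomputable def pd {d : ℕ} (i : Fin d) (φ : (Fin d → ℝ) → ℝ) (x : Fin d → ℝ) : ℝ :=
  fderiv ℝ φ x (Pi.single i 1)

/-- The quadratic form `q(f,g) = ∫_Ω (∇f·∇g + v f g)` of `−Δ + v` on `Ω`. -/
noncomputable def qform {d : ℕ} (Ω : Set (Fin d → ℝ)) (v f g : (Fin d → ℝ) → ℝ) : ℝ :=
  ∫ x in Ω, ((∑ i : Fin d, pd i f x * pd i g x) + v x * f x * g x)

/-- Reflection about the hyperplane `{x_d = 1/2}`. -/
noncomputable def reflectLast {n : ℕ} (x : Fin (n + 1) → ℝ) : Fin (n + 1) → ℝ :=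
  Function.update x (Fin.last n) (1 - x (Fin.last n))

lemma reflectLast_apply {n : ℕ} (x : Fin (n+1) → ℝ) (i : Fin (n+1)) :
    reflectLast x i = if i = Fin.last n then 1 - x i else x i := by
  unfold reflectLast
  rcases eq_or_ne i (Fin.last n) with h | h
  · subst h; simp
  · simp [Function.update_of_ne h, h]

noncomputable def refL (n : ℕ) : (Fin (n+1) → ℝ) →L[ℝ] (Fin (n+1) → ℝ) :=
  ContinuousLinearMap.pi fun i =>
    if i = Fin.last n then -(ContinuousLinearMap.proj i) else ContinuousLinearMap.proj i

lemma refL_apply {n : ℕ} (x : Fin (n+1) → ℝ) (i : Fin (n+1)) :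
    refL n x i = if i = Fin.last n then -x i else x i := by
  rw [refL, ContinuousLinearMap.pi_apply]
  by_cases h : i = Fin.last n <;> simp [h]

lemma reflectLast_eq_affine {n : ℕ} :
    reflectLast (n := n) = fun x => refL n x + Pi.single (Fin.last n) (1:ℝ) := by
  funext x i
  simp only [Pi.add_apply, refL_apply, reflectLast_apply, Pi.single_apply]
  by_cases h : i = Fin.last n <;> simp [h] <;> ring

lemma contDiff_reflectLast {n : ℕ} : ContDiff ℝ 1 (reflectLast (n := n)) := by
  rw [reflectLast_eq_affine]
  exact (refL n).contDiff.add contDiff_const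

lemma hasFDerivAt_reflectLast {n : ℕ} (x : Fin (n+1) → ℝ) :
    HasFDerivAt (reflectLast (n := n)) (refL n) x := by
  rw [reflectLast_eq_affine]
  exact (refL n).hasFDerivAt.add_const _

lemma refL_single {n : ℕ} (i : Fin (n+1)) :
    refL n (Pi.single i 1) = (if i = Fin.last n then (-1:ℝ) else 1) • (Pi.single i 1 : Fin (n+1) → ℝ) := by
  funext j
  rw [refL_apply]
  by_cases hj : j = Fin.last n <;> by_cases hi : i = Fin.last n <;>
    simp [hj, hi, Pi.single_apply] <;> simp [hj ▸ hi, Ne.symm]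

lemma reflectLast_involutive {n : ℕ} : Function.Involutive (reflectLast (n := n)) := by
  intro x; funext i
  rw [reflectLast_apply, reflectLast_apply]
  by_cases h : i = Fin.last n <;> simp [h]

lemma reflectLast_mem {n : ℕ} {x : Fin (n+1) → ℝ}
    (hx : x ∈ Set.Icc (0 : Fin (n+1) → ℝ) 1) :
    reflectLast x ∈ Set.Icc (0 : Fin (n+1) → ℝ) 1 := by
  obtain ⟨h0, h1⟩ := hx
  constructor <;> intro i <;> rw [reflectLast_apply] <;>
    by_cases h : i = Fin.last n <;>
    simp only [h, if_true, if_false, Pi.zero_apply, Pi.one_apply] <;>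
    [skip; skip; skip; skip] <;> first
    | (have := h0 i; have := h1 i; simp_all; linarith)
    | (have := h0 i; have := h1 i; simp_all)

lemma reflectLast_preimage_Icc {n : ℕ} :
    reflectLast ⁻¹' (Set.Icc (0 : Fin (n+1) → ℝ) 1) = Set.Icc (0 : Fin (n+1) → ℝ) 1 := by
  ext x
  constructor
  · intro hx
    have := reflectLast_mem hx
    rwa [reflectLast_involutive x] at this
  · exact fun hx => reflectLast_mem hx

noncomputable def reflectLastEquiv (n : ℕ) : (Fin (n+1) → ℝ) ≃ᵐ (Fin (n+1) → ℝ) where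
  toFun := reflectLast
  invFun := reflectLast
  left_inv := reflectLast_involutive
  right_inv := reflectLast_involutive
  measurable_toFun := contDiff_reflectLast.continuous.measurable
  measurable_invFun := contDiff_reflectLast.continuous.measurable

lemma pd_reflect {n : ℕ} (ψ : (Fin (n+1) → ℝ) → ℝ) (hψ : ContDiff ℝ 1 ψ)
    (i : Fin (n+1)) (x : Fin (n+1) → ℝ) :
    pd i (fun y => ψ (reflectLast y)) x =
      (if i = Fin.last n then (-1:ℝ) else 1) * pd i ψ (reflectLast x) := by
  have hd : HasFDerivAt (fun y => ψ (reflectLast y))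
      ((fderiv ℝ ψ (reflectLast x)).comp (refL n)) x :=
    (hψ.differentiable one_ne_zero (reflectLast x)).hasFDerivAt.comp x (hasFDerivAt_reflectLast x)
  rw [pd, hd.fderiv, ContinuousLinearMap.comp_apply, refL_single, _root_.map_smul, pd]
  by_cases h : i = Fin.last n <;> simp [h]
lemma measurePreserving_reflectLast {n : ℕ} :
    MeasurePreserving (reflectLast (n := n)) volume volume := by
  classical
  set D : Fin (n+1) → ℝ := fun i => if i = Fin.last n then -1 else 1 with hDdef
  have hdet : Matrix.det (Matrix.diagonal D) = -1 := by
    rw [Matrix.det_diagonal]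
    simp [hDdef, Finset.prod_ite_eq']
  have h1 : MeasurePreserving (Matrix.toLin' (Matrix.diagonal D))
      (volume : Measure (Fin (n+1) → ℝ)) volume := by
    refine ⟨(Matrix.toLin' (Matrix.diagonal D)).continuous_of_finiteDimensional.measurable, ?_⟩
    have := Real.smul_map_diagonal_volume_pi (D := D) (by rw [hdet]; norm_num)
    rwa [hdet, abs_neg, abs_one, ENNReal.ofReal_one, one_smul] at this
  have h2 : MeasurePreserving (fun x : Fin (n+1) → ℝ => x + Pi.single (Fin.last n) (1:ℝ))
      volume volume := measurePreserving_add_right volume _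
  have h3 := h2.comp h1
  have : reflectLast (n := n) =
      (fun x : Fin (n+1) → ℝ => x + Pi.single (Fin.last n) (1:ℝ)) ∘
        (Matrix.toLin' (Matrix.diagonal D)) := by
    funext x i
    have hl : Matrix.toLin' (Matrix.diagonal D) x i = D i * x i := by
      simp [Matrix.toLin'_apply, Matrix.mulVec_diagonal]
    simp only [Function.comp_apply, Pi.add_apply, hl, reflectLast_apply, hDdef,
      Pi.single_apply]
    by_cases h : i = Fin.last n <;> simp [h, Matrix.mulVec_diagonal] <;> ring
  rw [this]; exact h3

lemma qform_reflect {n : ℕ} (v ψ : (Fin (n+1) → ℝ) → ℝ)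
    (hsym : ∀ x, v (reflectLast x) = v x) (hψ : ContDiff ℝ 1 ψ) :
    qform (Set.Icc (0:Fin (n+1)→ℝ) 1) v (fun x => ψ (reflectLast x)) (fun x => ψ (reflectLast x))
      = qform (Set.Icc (0:Fin (n+1)→ℝ) 1) v ψ ψ := by
  have hpt : ∀ x : Fin (n+1) → ℝ,
      ((∑ i : Fin (n+1), pd i (fun y => ψ (reflectLast y)) x *
          pd i (fun y => ψ (reflectLast y)) x) +
        v x * ψ (reflectLast x) * ψ (reflectLast x)) =
      ((∑ i : Fin (n+1), pd i ψ (reflectLast x) * pd i ψ (reflectLast x)) +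
        v (reflectLast x) * ψ (reflectLast x) * ψ (reflectLast x)) := by
    intro x
    rw [hsym]
    congr 1
    refine Finset.sum_congr rfl fun i _ => ?_
    rw [pd_reflect ψ hψ i x]
    by_cases h : i = Fin.last n <;> simp [h] <;> ring
  rw [qform, qform]
  calc (∫ x in Set.Icc (0:Fin (n+1)→ℝ) 1,
        ((∑ i : Fin (n+1), pd i (fun y => ψ (reflectLast y)) x *
            pd i (fun y => ψ (reflectLast y)) x) +
          v x * ψ (reflectLast x) * ψ (reflectLast x)))
      = ∫ x in Set.Icc (0:Fin (n+1)→ℝ) 1,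
          ((∑ i : Fin (n+1), pd i ψ (reflectLast x) * pd i ψ (reflectLast x)) +
            v (reflectLast x) * ψ (reflectLast x) * ψ (reflectLast x)) := by
        simp only [hpt]
    _ = ∫ y in Set.Icc (0:Fin (n+1)→ℝ) 1,
          ((∑ i : Fin (n+1), pd i ψ y * pd i ψ y) + v y * ψ y * ψ y) := by
        nth_rewrite 1 [← reflectLast_preimage_Icc]
        exact measurePreserving_reflectLast.setIntegral_preimage_emb
          (reflectLastEquiv n).measurableEmbedding
          (fun y => (∑ i : Fin (n+1), pd i ψ y * pd i ψ y) + v y * ψ y * ψ y) _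

/-- Matching of ground states on the common face: if the zero-energy ground states
`Ψ₁, Ψ₂` on the unit cube are unique up to scalars, the potentials `v₁, v₂` are symmetric
about `{x_d = 1/2}`, and the double-cube Neumann operator `H₁₂` on
`U = C₁(0) ∪ C₁(e_d)` has ground state energy `0` (witnessed by a positive continuous
ground state `Φ` whose restrictions to the two unit cubes are zero-energy minimizers),
then there exist `μ₁, μ₂ > 0` with `μ₁Ψ₁(x',0) = μ₂Ψ₂(x',0)` on the face `{x_d = 0}`. -/
theorem ground_states_match_on_face {n : ℕ}
    (v₁ v₂ Ψ₁ Ψ₂ Φ : (Fin (n + 1) → ℝ) → ℝ)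
    (hv₁ : Continuous v₁) (hv₂ : Continuous v₂)
    (hsym₁ : ∀ x, v₁ (reflectLast x) = v₁ x)
    (hsym₂ : ∀ x, v₂ (reflectLast x) = v₂ x)
    (hΨ₁ : ContDiff ℝ 1 Ψ₁) (hΨ₂ : ContDiff ℝ 1 Ψ₂)
    (hΨ₁pos : ∀ x ∈ Set.Icc (0 : Fin (n + 1) → ℝ) 1, 0 < Ψ₁ x)
    (hΨ₂pos : ∀ x ∈ Set.Icc (0 : Fin (n + 1) → ℝ) 1, 0 < Ψ₂ x)
    (hgs₁ : qform (Set.Icc (0 : Fin (n + 1) → ℝ) 1) v₁ Ψ₁ Ψ₁ = 0)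
    (hgs₂ : qform (Set.Icc (0 : Fin (n + 1) → ℝ) 1) v₂ Ψ₂ Ψ₂ = 0)
    (huniq₁ : ∀ φ : (Fin (n + 1) → ℝ) → ℝ, ContDiff ℝ 1 φ →
      (∀ x ∈ Set.Icc (0 : Fin (n + 1) → ℝ) 1, 0 < φ x) →
      qform (Set.Icc (0 : Fin (n + 1) → ℝ) 1) v₁ φ φ = 0 →
      ∃ μ > 0, ∀ x ∈ Set.Icc (0 : Fin (n + 1) → ℝ) 1, φ x = μ * Ψ₁ x)
    (huniq₂ : ∀ φ : (Fin (n + 1) → ℝ) → ℝ, ContDiff ℝ 1 φ →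
      (∀ x ∈ Set.Icc (0 : Fin (n + 1) → ℝ) 1, 0 < φ x) →
      qform (Set.Icc (0 : Fin (n + 1) → ℝ) 1) v₂ φ φ = 0 →
      ∃ μ > 0, ∀ x ∈ Set.Icc (0 : Fin (n + 1) → ℝ) 1, φ x = μ * Ψ₂ x)
    (hΦ : ContDiff ℝ 1 Φ)
    (hΦpos : ∀ x ∈ Set.Icc (0 : Fin (n + 1) → ℝ) 1 ∪
        {y | y - Pi.single (Fin.last n) (1 : ℝ) ∈ Set.Icc (0 : Fin (n + 1) → ℝ) 1}, 0 < Φ x)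
    (hΦ₁ : qform (Set.Icc (0 : Fin (n + 1) → ℝ) 1) v₁ Φ Φ = 0)
    (hΦ₂ : qform (Set.Icc (0 : Fin (n + 1) → ℝ) 1) v₂
      (fun x => Φ (x + Pi.single (Fin.last n) (1 : ℝ)))
      (fun x => Φ (x + Pi.single (Fin.last n) (1 : ℝ))) = 0) :
    ∃ μ₁ > (0 : ℝ), ∃ μ₂ > (0 : ℝ),
      ∀ x ∈ Set.Icc (0 : Fin (n + 1) → ℝ) 1, x (Fin.last n) = 0 →
        μ₁ * Ψ₁ x = μ₂ * Ψ₂ x := by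

  classical
  obtain ⟨a, ha, hA⟩ := huniq₁ Φ hΦ (fun x hx => hΦpos x (Or.inl hx)) hΦ₁
  obtain ⟨b, hb, hB⟩ := huniq₂ (fun x => Φ (x + Pi.single (Fin.last n) 1))
    (hΦ.comp (contDiff_id.add contDiff_const))
    (fun x hx => hΦpos _ (Or.inr (by simpa using hx))) hΦ₂
  obtain ⟨c, hc, hC⟩ := huniq₁ (fun x => Ψ₁ (reflectLast x))
    (hΨ₁.comp contDiff_reflectLast)
    (fun x hx => hΨ₁pos _ (reflectLast_mem hx))
    (by rw [qform_reflect v₁ Ψ₁ hsym₁ hΨ₁]; exact hgs₁)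
  have hx0mem : (fun _ : Fin (n+1) => (1:ℝ)/2) ∈ Set.Icc (0 : Fin (n+1) → ℝ) 1 := by
    constructor <;> intro i <;> norm_num
  have hfix : reflectLast (fun _ : Fin (n+1) => (1:ℝ)/2) = (fun _ : Fin (n+1) => (1:ℝ)/2) := by
    funext i
    rw [reflectLast_apply]
    by_cases h : i = Fin.last n <;> simp [h] <;> norm_num
  have hc1 : c = 1 := by
    have h := hC _ hx0mem
    rw [hfix] at h
    have hpos := hΨ₁pos _ hx0mem
    have : Ψ₁ (fun _ : Fin (n+1) => (1:ℝ)/2) * 1 = Ψ₁ (fun _ : Fin (n+1) => (1:ℝ)/2) * c := by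
      rw [mul_one]; linarith [h]
    exact ((mul_left_cancel₀ (ne_of_gt hpos) this)).symm
  refine ⟨a, ha, b, hb, ?_⟩
  intro x hx hxlast
  have hy : x + Pi.single (Fin.last n) (1:ℝ) ∈ Set.Icc (0 : Fin (n+1) → ℝ) 1 := by
    rw [Set.mem_Icc] at hx
    obtain ⟨h0, h1⟩ := hx
    rw [Pi.le_def] at h0 h1
    rw [Set.mem_Icc]
    constructor <;> rw [Pi.le_def] <;> intro i <;>
      simp only [Pi.add_apply, Pi.single_apply, Pi.zero_apply, Pi.one_apply] <;>
      by_cases h : i = Fin.last n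
    · subst h; rw [if_pos rfl, hxlast]; norm_num
    · rw [if_neg h, add_zero]; exact h0 i
    · subst h; rw [if_pos rfl, hxlast]; norm_num
    · rw [if_neg h, add_zero]; exact h1 i
  have h3 : reflectLast x = x + Pi.single (Fin.last n) (1:ℝ) := by
    funext i
    rw [reflectLast_apply]
    by_cases h : i = Fin.last n
    · subst h; simp [hxlast]
    · simp [h, Pi.single_apply]
  have h4 := hC x hx
  rw [h3, hc1, one_mul] at h4
  have h1 := hA _ hy
  have h2 := hB x hx
  rw [h1, h4] at h2
  linarith [h2]
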